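/- arXiv:2605.06750 — 2 statements merged into one kernel-verified Lean document; each statement's English description precedes it below -/
import Mathlib

section
/- Let L ≥ 2 and fix a reference differential bit sequence b : Fin (L-1) → Bool. For every natural number n ≤ L-1, the number of keys s : Fin L → Bool such that the Hamming distance between D s and b is at most n, where (D s) l = xor (s l) (s (l+1)), equals 2 · ∑_{j=0}^{n} C(L-1,j). -/
private def prefXor (d : ℕ → Bool) : ℕ → Bool
  | 0 => false
  | k + 1 => xor (prefXor d k) (d k)

private lemma prefXor_congr {d d' : ℕ → Bool} :
    ∀ i, (∀ k < i, d k = d' k) → prefXor d i = prefXor d' i := by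
  intro i
  induction i with
  | zero => intro _; rfl
  | succ k ih =>
    intro h
    simp only [prefXor, ih (fun j hj => h j (by omega)), h k (by omega)]

private lemma bool_step (a p x y : Bool) (h : x = xor a p) :
    y = xor a (xor p (xor x y)) := by
  subst h; cases a <;> cases p <;> cases y <;> rfl

private lemma bool_step2 (c p e : Bool) : xor (xor c p) (xor c (xor p e)) = e := by
  cases c <;> cases p <;> cases e <;> rfl

private lemma key_eq (s : ℕ → Bool) :
    ∀ i, s i = xor (s 0) (prefXor (fun k => xor (s k) (s (k + 1))) i) := by
  intro i
  induction i with
  | zero => simp [prefXor]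
  | succ k ih =>
    show s (k + 1) = xor (s 0) (xor (prefXor _ k) (xor (s k) (s (k + 1))))
    exact bool_step _ _ _ _ ih

private lemma recon (L : ℕ) (c : Bool) (d : Fin (L - 1) → Bool) (l : Fin (L - 1)) :
    xor (xor c (prefXor (fun k => if h : k < L - 1 then d ⟨k, h⟩ else false) l.1))
      (xor c (prefXor (fun k => if h : k < L - 1 then d ⟨k, h⟩ else false) (l.1 + 1))) = d l := by
  have h1 : prefXor (fun k => if h : k < L - 1 then d ⟨k, h⟩ else false) (l.1 + 1)
      = xor (prefXor (fun k => if h : k < L - 1 then d ⟨k, h⟩ else false) l.1) (d l) := by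
    show xor _ (if h : l.1 < L - 1 then d ⟨l.1, h⟩ else false) = _
    rw [dif_pos l.2]
  rw [h1, bool_step2]

private lemma card_keys (L : ℕ) (hL : 2 ≤ L) (P : (Fin (L - 1) → Bool) → Prop)
    [DecidablePred P] :
    (Finset.univ.filter (fun s : Fin L → Bool =>
        P (fun l : Fin (L - 1) =>
          xor (s ⟨l.1, by have := l.2; omega⟩) (s ⟨l.1 + 1, by have := l.2; omega⟩)))).card
      = 2 * (Finset.univ.filter P).card := by
  have hprod : ((Finset.univ : Finset Bool) ×ˢ Finset.univ.filter P).card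
      = 2 * (Finset.univ.filter P).card := by
    simp [Finset.card_product]
  rw [← hprod]
  refine Finset.card_nbij'
    (i := fun s => (s ⟨0, by omega⟩, fun l : Fin (L - 1) =>
      xor (s ⟨l.1, by have := l.2; omega⟩) (s ⟨l.1 + 1, by have := l.2; omega⟩)))
    (j := fun p => fun i : Fin L =>
      xor p.1 (prefXor (fun k => if h : k < L - 1 then p.2 ⟨k, h⟩ else false) i.1))
    ?_ ?_ ?_ ?_
  · intro s hs
    simp only [Finset.mem_coe, Finset.mem_filter, Finset.mem_univ, true_and] at hs ⊢
    simp only [Finset.mem_coe, Finset.mem_product, Finset.mem_univ, true_and, Finset.mem_filter]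
    exact hs
  · intro p hp
    simp only [Finset.mem_coe, Finset.mem_product, Finset.mem_univ, true_and, Finset.mem_filter] at hp
    simp only [Finset.mem_coe, Finset.mem_filter, Finset.mem_univ, true_and]
    have : (fun l : Fin (L - 1) =>
        xor (xor p.1 (prefXor (fun k => if h : k < L - 1 then p.2 ⟨k, h⟩ else false) l.1))
          (xor p.1 (prefXor (fun k => if h : k < L - 1 then p.2 ⟨k, h⟩ else false) (l.1 + 1))))
        = p.2 := by
      funext l; exact recon L p.1 p.2 l
    rw [this]
    exact hp
  · intro s _
    funext i
    have hext := key_eq (fun k => if h : k < L then s ⟨k, h⟩ else false) i.1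
    simp only [dif_pos i.2, dif_pos (show (0 : ℕ) < L by omega)] at hext
    have hcong : prefXor (fun k =>
        xor (if h : k < L then s ⟨k, h⟩ else false)
          (if h : k + 1 < L then s ⟨k + 1, h⟩ else false)) i.1
        = prefXor (fun k => if h : k < L - 1 then
            xor (s ⟨k, by omega⟩) (s ⟨k + 1, by omega⟩) else false) i.1 := by
      apply prefXor_congr
      intro k hk
      have hk1 : k < L - 1 := by have := i.2; omega
      simp only [dif_pos (show k < L by omega), dif_pos (show k + 1 < L by omega), dif_pos hk1]
    rw [hcong] at hext
    show xor (s ⟨0, _⟩) _ = s i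
    rw [← hext]
  · intro p hp
    simp only [Finset.mem_coe, Finset.mem_product, Finset.mem_univ, true_and, Finset.mem_filter] at hp
    refine Prod.ext ?_ ?_
    · show xor p.1 (prefXor _ 0) = p.1
      simp [prefXor]
    · funext l
      exact recon L p.1 p.2 l

private lemma card_ball (m n : ℕ) (b : Fin m → Bool) :
    (Finset.univ.filter (fun d : Fin m → Bool => hammingDist d b ≤ n)).card
      = ∑ j ∈ Finset.range (n + 1), m.choose j := by
  have hcard : (Finset.univ.filter (fun d : Fin m → Bool => hammingDist d b ≤ n)).card
      = ((Finset.univ : Finset (Fin m)).powerset.filter (fun A => A.card ≤ n)).card := by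
    refine Finset.card_nbij'
      (i := fun d => Finset.univ.filter (fun i => d i ≠ b i))
      (j := fun A => fun i => if i ∈ A then !(b i) else b i) ?_ ?_ ?_ ?_
    · intro d hd
      simp only [Finset.mem_coe, Finset.mem_filter, Finset.mem_univ, true_and] at hd
      simp only [Finset.mem_coe, Finset.mem_filter, Finset.mem_powerset]
      exact ⟨Finset.filter_subset _ _, hd⟩
    · intro A hA
      simp only [Finset.mem_coe, Finset.mem_filter, Finset.mem_powerset] at hA
      simp only [Finset.mem_coe, Finset.mem_filter, Finset.mem_univ, true_and]
      have : hammingDist (fun i => if i ∈ A then !(b i) else b i) b = A.card := by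
        unfold hammingDist
        congr 1
        ext i
        simp only [Finset.mem_filter, Finset.mem_univ, true_and]
        by_cases h : i ∈ A <;> simp [h]
      rw [this]; exact hA.2
    · intro d _
      funext i
      by_cases h : d i = b i <;> simp [h, Finset.mem_filter]
      · cases hb : b i <;> cases hd : d i <;> simp_all
    · intro A hA
      simp only [Finset.mem_coe, Finset.mem_filter, Finset.mem_powerset] at hA
      ext i
      simp only [Finset.mem_filter, Finset.mem_univ, true_and]
      by_cases h : i ∈ A <;> simp [h]
  rw [hcard]
  have hbi : ((Finset.univ : Finset (Fin m)).powerset.filter (fun A => A.card ≤ n))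
      = (Finset.range (n + 1)).biUnion (fun j => Finset.powersetCard j Finset.univ) := by
    ext A
    simp only [Finset.mem_filter, Finset.mem_powerset, Finset.mem_biUnion, Finset.mem_range,
      Finset.mem_powersetCard]
    constructor
    · rintro ⟨hsub, hle⟩
      exact ⟨A.card, by omega, hsub, rfl⟩
    · rintro ⟨j, hj, hsub, hcardj⟩
      exact ⟨hsub, by omega⟩
  rw [hbi, Finset.card_biUnion]
  · refine Finset.sum_congr rfl fun j _ => ?_
    rw [Finset.card_powersetCard, Finset.card_univ, Fintype.card_fin]
  · intro x _ y _ hxy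
    simp only [Finset.disjoint_left]
    intro A hA hA'
    rw [Finset.mem_powersetCard] at hA hA'
    exact hxy (hA.2 ▸ hA'.2 ▸ rfl)

/-- The number of `L`-bit keys whose differential bit sequence
`(D s) l = xor (s l) (s (l+1))` lies within Hamming distance `n` of a reference
sequence `b` is exactly `2 ∑_{j=0}^{n} C(L-1,j)`. -/
theorem card_keys_diff_within_hamming (L : ℕ) (hL : 2 ≤ L)
    (b : Fin (L - 1) → Bool) (n : ℕ) (hn : n ≤ L - 1) :
    (Finset.univ.filter (fun s : Fin L → Bool =>
        hammingDist
          (fun l : Fin (L - 1) =>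
            xor (s ⟨l.1, by have := l.2; omega⟩) (s ⟨l.1 + 1, by have := l.2; omega⟩))
          b ≤ n)).card
      = 2 * ∑ j ∈ Finset.range (n + 1), (L - 1).choose j := by
  rw [card_keys L hL (fun d => hammingDist d b ≤ n), card_ball (L - 1) n b]
end

section
/- Let q ≥ 1, K ≥ 1, and fix a reference differential sequence d : Fin K → ZMod q. For every natural number n ≤ K, the number of key sequences s : Fin (K+1) → ZMod q such that the Hamming distance between D s and d is at most n, where (D s) l = s (l+1) - s l, equals q · ∑_{j=0}^{n} C(K,j) · (q-1)^j. -/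
open Finset

section aux

variable {q K : ℕ}

/-- Number of `t` with prescribed disagreement set `A` relative to `d`. -/
lemma card_support_eq [NeZero q] (d : Fin K → ZMod q) (A : Finset (Fin K)) :
    #(univ.filter fun t : Fin K → ZMod q =>
        (univ.filter fun i => t i ≠ d i) = A) = (q - 1) ^ A.card := by
  have : #(univ.filter fun t : Fin K → ZMod q =>
        (univ.filter fun i => t i ≠ d i) = A)
      = #(A.pi fun i => (univ.erase (d i))) := by
    apply Finset.card_bij' (fun t _ => fun a _ => t a)
      (fun g _ => fun i => if h : i ∈ A then g i h else d i)
    · intro t ht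
      simp only [mem_filter, mem_univ, true_and] at ht
      simp only [Finset.mem_pi, Finset.mem_erase, Finset.mem_univ, and_true]
      intro a ha
      have : a ∈ univ.filter fun i => t i ≠ d i := ht ▸ ha
      simpa using this
    · intro g hg
      simp only [Finset.mem_pi, Finset.mem_erase, Finset.mem_univ, and_true] at hg
      simp only [mem_filter, mem_univ, true_and]
      ext i
      by_cases h : i ∈ A
      · simp [h, hg i h]
      · simp [h]
    · intro t ht
      simp only [mem_filter, mem_univ, true_and] at ht
      funext i
      by_cases h : i ∈ A
      · simp [h]
      · have : i ∉ univ.filter fun i => t i ≠ d i := ht ▸ h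
        simp only [mem_filter, mem_univ, true_and, not_not] at this
        simp [h, this]
    · intro g hg
      funext a ha
      simp [ha]
  rw [this, Finset.card_pi]
  have : ∀ i ∈ A, #(univ.erase (d i)) = q - 1 := by
    intro i _
    rw [Finset.card_erase_of_mem (Finset.mem_univ _), Finset.card_univ, ZMod.card]
  rw [Finset.prod_congr rfl this, Finset.prod_const]

lemma card_sphere (hq : 1 ≤ q) (d : Fin K → ZMod q) (j : ℕ) :
    haveI : NeZero q := ⟨by omega⟩
    Nat.card {t : Fin K → ZMod q // hammingDist t d = j}
      = K.choose j * (q - 1) ^ j := by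
  haveI : NeZero q := ⟨by omega⟩
  rw [Nat.card_eq_fintype_card, Fintype.card_subtype]
  have hsplit : (univ.filter fun t : Fin K → ZMod q => hammingDist t d = j)
      = (Finset.powersetCard j (univ : Finset (Fin K))).biUnion
          (fun A => univ.filter fun t : Fin K → ZMod q =>
            (univ.filter fun i => t i ≠ d i) = A) := by
    ext t
    simp only [mem_filter, mem_univ, true_and, Finset.mem_biUnion,
      Finset.mem_powersetCard]
    constructor
    · intro h
      exact ⟨univ.filter fun i => t i ≠ d i, ⟨Finset.subset_univ _, h⟩, rfl⟩
    · rintro ⟨A, ⟨-, hA⟩, rfl⟩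
      exact hA
  rw [hsplit, Finset.card_biUnion]
  · have : ∀ A ∈ Finset.powersetCard j (univ : Finset (Fin K)),
        #(univ.filter fun t : Fin K → ZMod q =>
            (univ.filter fun i => t i ≠ d i) = A) = (q - 1) ^ j := by
      intro A hA
      rw [card_support_eq d A, (Finset.mem_powersetCard.mp hA).2]
    rw [Finset.sum_congr rfl this, Finset.sum_const, Finset.card_powersetCard,
      Finset.card_univ, Fintype.card_fin, smul_eq_mul]
  · intro A _ B _ hAB
    rw [Function.onFun, Finset.disjoint_left]
    intro t h1 h2
    simp only [mem_filter, mem_univ, true_and] at h1 h2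
    exact hAB (h1.symm.trans h2)

lemma card_ball_s15 (hq : 1 ≤ q) (d : Fin K → ZMod q) (n : ℕ) :
    Nat.card {t : Fin K → ZMod q // hammingDist t d ≤ n}
      = ∑ j ∈ Finset.range (n + 1), K.choose j * (q - 1) ^ j := by
  haveI : NeZero q := ⟨by omega⟩
  rw [Nat.card_eq_fintype_card, Fintype.card_subtype]
  have hsplit : (univ.filter fun t : Fin K → ZMod q => hammingDist t d ≤ n)
      = (Finset.range (n + 1)).biUnion
          (fun j => univ.filter fun t : Fin K → ZMod q => hammingDist t d = j) := by
    ext t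
    simp only [mem_filter, mem_univ, true_and, Finset.mem_biUnion, Finset.mem_range]
    constructor
    · intro h; exact ⟨hammingDist t d, by omega, rfl⟩
    · rintro ⟨j, hj, rfl⟩; omega
  rw [hsplit, Finset.card_biUnion]
  · refine Finset.sum_congr rfl fun j _ => ?_
    have := card_sphere hq d j
    rwa [Nat.card_eq_fintype_card, Fintype.card_subtype] at this
  · intro a _ b _ hab
    rw [Function.onFun, Finset.disjoint_left]
    intro t h1 h2
    simp only [mem_filter, mem_univ, true_and] at h1 h2
    exact hab (h1.symm.trans h2)

/-- `s ↦ (s 0, D s)` is a bijection. -/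
def keyEquiv (q K : ℕ) : (Fin (K + 1) → ZMod q) ≃ ZMod q × (Fin K → ZMod q) where
  toFun s := (s 0, fun l : Fin K =>
    s ⟨l.1 + 1, by have := l.2; omega⟩ - s ⟨l.1, by have := l.2; omega⟩)
  invFun p := fun i => p.1 + ∑ l ∈ Finset.range i.1,
    if h : l < K then p.2 ⟨l, h⟩ else 0
  left_inv s := by
    funext i
    obtain ⟨i, hi⟩ := i
    induction i with
    | zero => simp
    | succ m ih =>
      have hm : m < K := by omega
      have ihm := ih (by omega)
      beta_reduce at ihm ⊢
      rw [Finset.sum_range_succ, ← add_assoc, ihm, dif_pos hm]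
      exact add_sub_cancel _ _
  right_inv p := by
    obtain ⟨a, t⟩ := p
    refine Prod.ext ?_ ?_
    · simp
    · funext l
      beta_reduce
      simp only [Finset.sum_range_succ]
      rw [dif_pos l.2]
      abel

end aux

/-- The number of key sequences `s : Fin (K+1) → ZMod q` whose differential
sequence `(D s) l = s (l+1) - s l` lies within Hamming distance `n` of a
reference `d : Fin K → ZMod q` is exactly `q ∑_{j=0}^{n} C(K,j) (q-1)^j`. -/
theorem card_keys_diff_within_hamming_q (q K : ℕ) (hq : 1 ≤ q) (hK : 1 ≤ K)
    (d : Fin K → ZMod q) (n : ℕ) (hn : n ≤ K) :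
    Nat.card {s : Fin (K + 1) → ZMod q //
        hammingDist
          (fun l : Fin K =>
            s ⟨l.1 + 1, by have := l.2; omega⟩ - s ⟨l.1, by have := l.2; omega⟩)
          d ≤ n}
      = q * ∑ j ∈ Finset.range (n + 1), K.choose j * (q - 1) ^ j := by
  haveI : NeZero q := ⟨by omega⟩
  have e : {s : Fin (K + 1) → ZMod q //
        hammingDist
          (fun l : Fin K =>
            s ⟨l.1 + 1, by have := l.2; omega⟩ - s ⟨l.1, by have := l.2; omega⟩)
          d ≤ n} ≃
      {p : ZMod q × (Fin K → ZMod q) // hammingDist p.2 d ≤ n} :=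
    (keyEquiv q K).subtypeEquiv (fun s => Iff.rfl)
  have e2 : {p : ZMod q × (Fin K → ZMod q) // hammingDist p.2 d ≤ n} ≃
      ZMod q × {t : Fin K → ZMod q // hammingDist t d ≤ n} :=
    { toFun := fun p => (p.1.1, ⟨p.1.2, p.2⟩)
      invFun := fun p => ⟨(p.1, p.2.1), p.2.2⟩
      left_inv := fun p => rfl
      right_inv := fun p => rfl }
  rw [Nat.card_congr (e.trans e2), Nat.card_prod, Nat.card_eq_fintype_card, ZMod.card,
    card_ball_s15 hq d n]
end
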